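/- Let G = G₀ ∪ G₀v be a finite generalized dihedral group (G₀ abelian of index 2, v²=1, vgv=g⁻¹ for g∈G₀). Then every element of G of order 4 can be written as a product of two elements of G each of order at most 2; consequently every half-automorphism of M(G,2) is trivial. -/

import Mathlib

/-- The Chein loop multiplication on `M(G,2) = G × Bool`,
where `(g, false)` represents `g` and `(g, true)` represents `gu`. -/
def cmul {G : Type*} [Group G] : G × Bool → G × Bool → G × Bool
  | (g, false), (h, false) => (g * h, false)
  | (g, false), (h, true)  => (h * g, true)
  | (g, true),  (h, false) => (g * h⁻¹, true)
  | (g, true),  (h, true)  => (h⁻¹ * g, false)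

/-- A half-automorphism of the Chein loop `M(G,2)`. -/
def IsHalfAut {G : Type*} [Group G] (f : G × Bool → G × Bool) : Prop :=
  Function.Bijective f ∧
    ∀ x y, f (cmul x y) = cmul (f x) (f y) ∨ f (cmul x y) = cmul (f y) (f x)


section GDaux

variable {G : Type*} [Group G] {G₀ : Subgroup G} {v : G}

theorem gd_vv (hv2 : v ^ 2 = 1) : v * v = 1 := by rw [← pow_two]; exact hv2

theorem gd_mul_v_mem (hidx : G₀.index = 2) (hv : v ∉ G₀) (hv2 : v ^ 2 = 1)
    {g : G} (hg : g ∉ G₀) : g * v ∈ G₀ := by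
  obtain ⟨a, ha⟩ := Subgroup.index_eq_two_iff.mp hidx
  have hga : g * a ∈ G₀ := by
    rcases ha g with h | h
    · exact h.1
    · exact absurd h.1 hg
  have hva : v * a ∈ G₀ := by
    rcases ha v with h | h
    · exact h.1
    · exact absurd h.1 hv
  have h2 : (g * a) * (v * a)⁻¹ = g * v⁻¹ := by group
  have h3 : v⁻¹ = v := by
    rw [inv_eq_iff_mul_eq_one]; exact gd_vv hv2
  have h4 := mul_mem hga (inv_mem hva)
  rwa [h2, h3] at h4

theorem gd_out_sq (hidx : G₀.index = 2) (hv : v ∉ G₀) (hv2 : v ^ 2 = 1)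
    (hconj : ∀ g ∈ G₀, v * g * v = g⁻¹) {g : G} (hg : g ∉ G₀) : g * g = 1 := by
  have ha : g * v ∈ G₀ := gd_mul_v_mem hidx hv hv2 hg
  have hvv : v * v = 1 := gd_vv hv2
  have h1 : v * (g * v) * v = (g * v)⁻¹ := hconj _ ha
  have h2 : v * (g * v) * v = v * g * (v * v) := by group
  rw [hvv, mul_one] at h2
  have h3 : v * g = v⁻¹ * g⁻¹ := by rw [← h2, h1, mul_inv_rev]
  have h4 : v⁻¹ = v := by rw [inv_eq_iff_mul_eq_one]; exact hvv
  rw [h4] at h3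
  have h5 : g = g⁻¹ := mul_left_cancel h3
  nth_rewrite 2 [h5]
  exact mul_inv_cancel g

theorem gd_out_comm (hidx : G₀.index = 2)
    (hab : ∀ a ∈ G₀, ∀ b ∈ G₀, a * b = b * a) (hv : v ∉ G₀) (hv2 : v ^ 2 = 1)
    (hconj : ∀ g ∈ G₀, v * g * v = g⁻¹) {g b : G} (hg : g ∉ G₀) (hb : b ∈ G₀) :
    g * b = b⁻¹ * g := by
  have ha : g * v ∈ G₀ := gd_mul_v_mem hidx hv hv2 hg
  have hvv : v * v = 1 := gd_vv hv2
  have hvb : v * b = b⁻¹ * v := by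
    have h1 := hconj b hb
    have h2 : v * b * (v * v) = (v * b * v) * v := by group
    rw [hvv, mul_one, h1] at h2
    exact h2
  have e1 : (g * v) * (v * b) = g * (v * v) * b := by group
  rw [hvv] at e1
  simp only [mul_one] at e1
  have e2 : (g * v) * (b⁻¹ * v) = b⁻¹ * g := by
    have h6 : (g * v) * b⁻¹ = b⁻¹ * (g * v) := hab _ ha _ (inv_mem hb)
    calc (g * v) * (b⁻¹ * v) = ((g * v) * b⁻¹) * v := by group
      _ = (b⁻¹ * (g * v)) * v := by rw [h6]
      _ = b⁻¹ * (g * (v * v)) := by group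
      _ = b⁻¹ * g := by rw [hvv, mul_one]
  rw [← e1, hvb, e2]

theorem gd_mem_mul_iff (hidx : G₀.index = 2) (hv : v ∉ G₀) (hv2 : v ^ 2 = 1)
    (g h : G) : g * h ∈ G₀ ↔ (g ∈ G₀ ↔ h ∈ G₀) := by
  by_cases hg : g ∈ G₀ <;> by_cases hh : h ∈ G₀
  · simp [hg, hh, mul_mem hg hh]
  · have hm : g * h ∉ G₀ := fun hm => hh (by
      have h2 := mul_mem (inv_mem hg) hm
      rwa [← mul_assoc, inv_mul_cancel, one_mul] at h2)
    simp [hg, hh, hm]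
  · have hm : g * h ∉ G₀ := fun hm => hg (by
      have h2 := mul_mem hm (inv_mem hh)
      rwa [mul_assoc, mul_inv_cancel, mul_one] at h2)
    simp [hg, hh, hm]
  · have hhi : h⁻¹ ∉ G₀ := fun hm => hh (by simpa using inv_mem hm)
    have h1 : h⁻¹ * v ∈ G₀ := gd_mul_v_mem hidx hv hv2 hhi
    have h2 : (g * v) * (h⁻¹ * v)⁻¹ ∈ G₀ := mul_mem (gd_mul_v_mem hidx hv hv2 hg) (inv_mem h1)
    have h3 : (g * v) * (h⁻¹ * v)⁻¹ = g * (v * v⁻¹) * h := by group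
    rw [mul_inv_cancel, mul_one] at h3
    rw [h3] at h2
    simp [hg, hh, h2]

-- ## Loop-level lemmas

theorem gd_bool (x y : G × Bool) : (cmul x y).2 = xor x.2 y.2 := by
  obtain ⟨g, _ | _⟩ := x <;> obtain ⟨h, _ | _⟩ := y <;> rfl

theorem gd_memQ (hidx : G₀.index = 2) (hv : v ∉ G₀) (hv2 : v ^ 2 = 1)
    (x y : G × Bool) : (cmul x y).1 ∈ G₀ ↔ (x.1 ∈ G₀ ↔ y.1 ∈ G₀) := by
  obtain ⟨g, _ | _⟩ := x <;> obtain ⟨h, _ | _⟩ := y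
  · simpa [cmul] using gd_mem_mul_iff hidx hv hv2 g h
  · have := gd_mem_mul_iff hidx hv hv2 h g
    simp only [cmul]
    rw [this]; tauto
  · have := gd_mem_mul_iff hidx hv hv2 g h⁻¹
    simp only [cmul]
    rw [this, inv_mem_iff]
  · have := gd_mem_mul_iff hidx hv hv2 h⁻¹ g
    simp only [cmul]
    rw [this, inv_mem_iff]; tauto

theorem gd_inA_cmul (hidx : G₀.index = 2) (hv : v ∉ G₀) (hv2 : v ^ 2 = 1)
    (x y : G × Bool) :
    ((cmul x y).1 ∈ G₀ ∧ (cmul x y).2 = false) ↔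
      ((x.1 ∈ G₀ ↔ y.1 ∈ G₀) ∧ x.2 = y.2) := by
  rw [gd_memQ hidx hv hv2, gd_bool]
  constructor
  · rintro ⟨h1, h2⟩
    refine ⟨h1, ?_⟩
    cases hx : x.2 <;> cases hy : y.2 <;> simp [hx, hy] at h2 ⊢
  · rintro ⟨h1, h2⟩
    refine ⟨h1, ?_⟩
    rw [h2]
    cases y.2 <;> rfl

theorem gd_cancel {u u' : G} (z : G × Bool)
    (h : cmul (u, false) z = cmul (u', false) z) : u = u' := by
  obtain ⟨g, _ | _⟩ := z
  · have h1 : u * g = u' * g := congrArg Prod.fst h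
    exact mul_right_cancel h1
  · have h1 : g * u = g * u' := congrArg Prod.fst h
    exact mul_left_cancel h1

theorem gd_one (z : G × Bool) : cmul ((1 : G), false) z = z := by
  obtain ⟨g, _ | _⟩ := z
  · show ((1 : G) * g, false) = (g, false)
    rw [one_mul]
  · show (g * (1 : G), true) = (g, true)
    rw [mul_one]

theorem gd_I1 (hidx : G₀.index = 2)
    (hab : ∀ a ∈ G₀, ∀ b ∈ G₀, a * b = b * a) (hv : v ∉ G₀) (hv2 : v ^ 2 = 1)
    (hconj : ∀ g ∈ G₀, v * g * v = g⁻¹) {a : G} (ha : a ∈ G₀) (w : G × Bool)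
    (hw : ¬(w.1 ∈ G₀ ∧ w.2 = false)) :
    cmul w (a, false) = cmul ((a⁻¹ : G), false) w := by
  obtain ⟨g, _ | _⟩ := w
  · have hg : g ∉ G₀ := fun h => hw ⟨h, rfl⟩
    show ((g * a : G), false) = (a⁻¹ * g, false)
    rw [gd_out_comm hidx hab hv hv2 hconj hg ha]
  · show ((g * a⁻¹ : G), true) = (g * a⁻¹, true)
    rfl

theorem gd_I2 (hidx : G₀.index = 2)
    (hab : ∀ a ∈ G₀, ∀ b ∈ G₀, a * b = b * a) (hv : v ∉ G₀) (hv2 : v ^ 2 = 1)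
    (hconj : ∀ g ∈ G₀, v * g * v = g⁻¹) {a b : G} (ha : a ∈ G₀) (hb : b ∈ G₀)
    (w : G × Bool) (hw : ¬(w.1 ∈ G₀ ∧ w.2 = false)) :
    cmul (cmul (a, false) w) (cmul (b, false) w) = ((a * b⁻¹ : G), false) := by
  obtain ⟨g, _ | _⟩ := w
  · have hg : g ∉ G₀ := fun h => hw ⟨h, rfl⟩
    show ((a * g) * (b * g), false) = (a * b⁻¹, false)
    have h1 : g * b = b⁻¹ * g := gd_out_comm hidx hab hv hv2 hconj hg hb
    have h2 : (a * g) * (b * g) = a * (g * b) * g := by group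
    rw [h1] at h2
    have h3 : a * (b⁻¹ * g) * g = a * b⁻¹ * (g * g) := by group
    rw [gd_out_sq hidx hv hv2 hconj hg, mul_one] at h3
    rw [h2, h3]
  · show (((g * b)⁻¹ * (g * a) : G), false) = (a * b⁻¹, false)
    have h1 : (g * b)⁻¹ * (g * a) = b⁻¹ * a := by group
    rw [h1, hab _ (inv_mem hb) _ ha]

theorem gd_I3c (hidx : G₀.index = 2) (hv : v ∉ G₀) (hv2 : v ^ 2 = 1)
    (hconj : ∀ g ∈ G₀, v * g * v = g⁻¹) (w w' : G × Bool)
    (hw : ¬(w.1 ∈ G₀ ∧ w.2 = false)) (hw' : ¬(w'.1 ∈ G₀ ∧ w'.2 = false))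
    (hne : ¬((w.1 ∈ G₀ ↔ w'.1 ∈ G₀) ∧ w.2 = w'.2)) :
    cmul w w' = cmul w' w := by
  obtain ⟨g, _ | _⟩ := w <;> obtain ⟨h, _ | _⟩ := w'
  · exfalso
    have hg : g ∉ G₀ := fun h2 => hw ⟨h2, rfl⟩
    have hh : h ∉ G₀ := fun h2 => hw' ⟨h2, rfl⟩
    exact hne ⟨by simp [hg, hh], rfl⟩
  · have hg : g ∉ G₀ := fun h2 => hw ⟨h2, rfl⟩
    show ((h * g : G), true) = (h * g⁻¹, true)
    rw [inv_eq_of_mul_eq_one_right (gd_out_sq hidx hv hv2 hconj hg)]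
  · have hh : h ∉ G₀ := fun h2 => hw' ⟨h2, rfl⟩
    show ((g * h⁻¹ : G), true) = (g * h, true)
    rw [inv_eq_of_mul_eq_one_right (gd_out_sq hidx hv hv2 hconj hh)]
  · have hgh : h⁻¹ * g ∉ G₀ := by
      rw [gd_mem_mul_iff hidx hv hv2, inv_mem_iff]
      intro hiff
      exact hne ⟨hiff.symm, by trivial⟩
    show ((h⁻¹ * g : G), false) = (g⁻¹ * h, false)
    have : (h⁻¹ * g)⁻¹ = g⁻¹ * h := by group
    rw [← this, inv_eq_of_mul_eq_one_right (gd_out_sq hidx hv hv2 hconj hgh)]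

theorem gd_I3 (hidx : G₀.index = 2)
    (hab : ∀ a ∈ G₀, ∀ b ∈ G₀, a * b = b * a) (hv : v ∉ G₀) (hv2 : v ^ 2 = 1)
    (hconj : ∀ g ∈ G₀, v * g * v = g⁻¹) {a b : G} (ha : a ∈ G₀) (hb : b ∈ G₀)
    (w w' : G × Bool)
    (hw : ¬(w.1 ∈ G₀ ∧ w.2 = false)) (hw' : ¬(w'.1 ∈ G₀ ∧ w'.2 = false))
    (hne : ¬((w.1 ∈ G₀ ↔ w'.1 ∈ G₀) ∧ w.2 = w'.2)) :
    cmul (cmul (a, false) w) (cmul (b, false) w') =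
      cmul (((a * b)⁻¹ : G), false) (cmul w w') := by
  have hout : ∀ {z : G}, z ∉ G₀ → ∀ {c : G}, c ∈ G₀ → z * c = c⁻¹ * z :=
    fun hz _ hc => gd_out_comm hidx hab hv hv2 hconj hz hc
  obtain ⟨g, _ | _⟩ := w <;> obtain ⟨h, _ | _⟩ := w'
  · exfalso
    have hg : g ∉ G₀ := fun h2 => hw ⟨h2, rfl⟩
    have hh : h ∉ G₀ := fun h2 => hw' ⟨h2, rfl⟩
    exact hne ⟨by simp [hg, hh], rfl⟩
  · have hg : g ∉ G₀ := fun h2 => hw ⟨h2, rfl⟩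
    show (((h * b) * (a * g) : G), true) = ((h * g) * (a * b)⁻¹, true)
    have h1 : g * (a * b)⁻¹ = (a * b) * g := by
      rw [hout hg (inv_mem (mul_mem ha hb)), inv_inv]
    have h2 : (h * b) * (a * g) = (h * g) * (a * b)⁻¹ := by
      calc (h * b) * (a * g) = h * (b * a) * g := by group
        _ = h * (a * b) * g := by rw [hab _ hb _ ha]
        _ = h * ((a * b) * g) := by group
        _ = h * (g * (a * b)⁻¹) := by rw [← h1]
        _ = (h * g) * (a * b)⁻¹ := by group
    rw [h2]
  · have hh : h ∉ G₀ := fun h2 => hw' ⟨h2, rfl⟩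
    have hinv : h⁻¹ ∉ G₀ := fun hm => hh (by simpa using inv_mem hm)
    show (((g * a) * (b * h)⁻¹ : G), true) = ((g * h⁻¹) * (a * b)⁻¹, true)
    have e : h⁻¹ * a⁻¹ = a * h⁻¹ := by rw [hout hinv (inv_mem ha), inv_inv]
    have h2 : (g * a) * (b * h)⁻¹ = (g * h⁻¹) * (a * b)⁻¹ := by
      calc (g * a) * (b * h)⁻¹ = g * (a * h⁻¹) * b⁻¹ := by group
        _ = g * (h⁻¹ * a⁻¹) * b⁻¹ := by rw [e]
        _ = g * h⁻¹ * (a⁻¹ * b⁻¹) := by group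
        _ = g * h⁻¹ * (b⁻¹ * a⁻¹) := by rw [hab _ (inv_mem ha) _ (inv_mem hb)]
        _ = (g * h⁻¹) * (a * b)⁻¹ := by group
    rw [h2]
  · have hgh : h⁻¹ * g ∉ G₀ := by
      rw [gd_mem_mul_iff hidx hv hv2, inv_mem_iff]
      intro hiff
      exact hne ⟨hiff.symm, by trivial⟩
    show (((h * b)⁻¹ * (g * a) : G), false) = ((a * b)⁻¹ * (h⁻¹ * g), false)
    have h2 : (h * b)⁻¹ * (g * a) = (a * b)⁻¹ * (h⁻¹ * g) := by
      calc (h * b)⁻¹ * (g * a) = b⁻¹ * ((h⁻¹ * g) * a) := by group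
        _ = b⁻¹ * (a⁻¹ * (h⁻¹ * g)) := by rw [hout hgh ha]
        _ = (a * b)⁻¹ * (h⁻¹ * g) := by group
    rw [h2]

theorem gd_transQ (hidx : G₀.index = 2) (hv : v ∉ G₀) (hv2 : v ^ 2 = 1)
    (w w' : G × Bool)
    (hw : ¬(w.1 ∈ G₀ ∧ w.2 = false)) (hw' : ¬(w'.1 ∈ G₀ ∧ w'.2 = false))
    (hsame : (w.1 ∈ G₀ ↔ w'.1 ∈ G₀) ∧ w.2 = w'.2) :
    ∃ c ∈ G₀, cmul ((c : G), false) w = w' := by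
  obtain ⟨g, _ | _⟩ := w <;> obtain ⟨h, _ | _⟩ := w'
  · have hg : g ∉ G₀ := fun h2 => hw ⟨h2, rfl⟩
    have hh : h ∉ G₀ := fun h2 => hw' ⟨h2, rfl⟩
    have hgi : g⁻¹ ∉ G₀ := fun hm => hg (by simpa using inv_mem hm)
    refine ⟨h * g⁻¹, ?_, ?_⟩
    · rw [gd_mem_mul_iff hidx hv hv2]; simp [hh, hgi]
    · show ((h * g⁻¹ * g : G), false) = (h, false)
      rw [mul_assoc, inv_mul_cancel, mul_one]
  · exact absurd hsame.2 (by simp)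
  · exact absurd hsame.2 (by simp)
  · refine ⟨g⁻¹ * h, ?_, ?_⟩
    · by_cases hg : g ∈ G₀
      · exact mul_mem (inv_mem hg) (hsame.1.mp hg)
      · have hh : h ∉ G₀ := fun h2 => hg (hsame.1.mpr h2)
        have hgi : g⁻¹ ∉ G₀ := fun hm => hg (by simpa using inv_mem hm)
        rw [gd_mem_mul_iff hidx hv hv2]; simp [hh, hgi]
    · show ((g * (g⁻¹ * h) : G), true) = (h, true)
      rw [← mul_assoc, mul_inv_cancel, one_mul]

theorem gd_comm_all (hidx : G₀.index = 2)
    (hab : ∀ a ∈ G₀, ∀ b ∈ G₀, a * b = b * a) (hv : v ∉ G₀) (hv2 : v ^ 2 = 1)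
    (hconj : ∀ g ∈ G₀, v * g * v = g⁻¹) (hel : ∀ a ∈ G₀, a * a = 1)
    (x y : G × Bool) : cmul x y = cmul y x := by
  have hallsq : ∀ z : G, z * z = 1 := by
    intro z
    by_cases hz : z ∈ G₀
    · exact hel z hz
    · exact gd_out_sq hidx hv hv2 hconj hz
  have hallinv' : ∀ z : G, z⁻¹ = z := fun z => by
    rw [inv_eq_iff_mul_eq_one]; exact hallsq z
  have hcomm0 : ∀ g h : G, g * h = h * g := by
    intro g h
    have h1 : (g * h)⁻¹ = g * h := hallinv' (g * h)
    rw [mul_inv_rev, hallinv' g, hallinv' h] at h1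
    exact h1.symm
  obtain ⟨g, _ | _⟩ := x <;> obtain ⟨h, _ | _⟩ := y
  · show ((g * h : G), false) = (h * g, false)
    rw [hcomm0]
  · show ((h * g : G), true) = (h * g⁻¹, true)
    rw [hallinv' g]
  · show ((g * h⁻¹ : G), true) = (g * h, true)
    rw [hallinv' h]
  · show ((h⁻¹ * g : G), false) = (g⁻¹ * h, false)
    rw [hallinv' h, hallinv' g, hcomm0]
end GDaux



/-- In a finite generalized dihedral group `G = G₀ ∪ G₀v`, every element of
order `4` is a product of two elements of order at most `2`; consequently every
half-automorphism of `M(G,2)` is trivial. -/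
theorem generalized_dihedral_half_trivial {G : Type*} [Group G] [Finite G]
    (G₀ : Subgroup G) (hab : ∀ a ∈ G₀, ∀ b ∈ G₀, a * b = b * a)
    (hidx : G₀.index = 2) (v : G) (hv : v ∉ G₀) (hv2 : v ^ 2 = 1)
    (hconj : ∀ g ∈ G₀, v * g * v = g⁻¹) :
    (∀ x : G, orderOf x = 4 →
      ∃ a b : G, x = a * b ∧ orderOf a ≤ 2 ∧ orderOf b ≤ 2) ∧
    (∀ f : G × Bool → G × Bool, IsHalfAut f →
      (∀ x y : G × Bool, f (cmul x y) = cmul (f x) (f y)) ∨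
      (∀ x y : G × Bool, f (cmul x y) = cmul (f y) (f x))) := by
  constructor
  · -- Part 1
    intro x hx
    have hxin : x ∈ G₀ := by
      by_contra hxout
      have h1 := gd_out_sq hidx hv hv2 hconj hxout
      have h2 : orderOf x ≤ 2 :=
        orderOf_le_of_pow_eq_one (by norm_num) (by rwa [pow_two])
      omega
    refine ⟨x * v, v, ?_, ?_, ?_⟩
    · rw [mul_assoc, gd_vv hv2, mul_one]
    · have hout : x * v ∉ G₀ := fun hm => hv (by
        have h3 := mul_mem (inv_mem hxin) hm
        rwa [← mul_assoc, inv_mul_cancel, one_mul] at h3)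
      exact orderOf_le_of_pow_eq_one (by norm_num)
        (by rw [pow_two]; exact gd_out_sq hidx hv hv2 hconj hout)
    · exact orderOf_le_of_pow_eq_one (by norm_num) hv2
  · -- Part 2
    intro f hf
    obtain ⟨hbij, hd⟩ := hf
    have hinj : Function.Injective f := hbij.1
    by_cases hel : ∀ a ∈ G₀, a * a = 1
    · left
      intro x y
      rcases hd x y with h | h
      · exact h
      · rw [h]
        exact gd_comm_all hidx hab hv hv2 hconj hel (f y) (f x)
    · push_neg at hel
      obtain ⟨s, hsG, hs2⟩ := hel
      -- basic facts about f
      have hsq : ∀ x, f (cmul x x) = cmul (f x) (f x) := by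
        intro x; rcases hd x x with h | h <;> exact h
      have hone : f ((1 : G), false) = ((1 : G), false) := by
        have h1 : cmul ((1 : G), false) ((1 : G), false) = ((1 : G), false) := by
          show ((1 : G) * 1, false) = ((1 : G), false)
          rw [one_mul]
        have h2 := hsq ((1 : G), false)
        rw [h1] at h2
        generalize hz : f ((1 : G), false) = z at h2 ⊢
        obtain ⟨u, _ | _⟩ := z
        · have h3 : u = u * u := congrArg Prod.fst h2
          have h4 : u = 1 := by
            have h5 : u * 1 = u * u := by rwa [mul_one]
            have := mul_left_cancel h5
            exact this.symm
          rw [h4]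
        · have h3 : cmul ((u : G), true) ((u : G), true) = ((u⁻¹ * u : G), false) := rfl
          rw [h3] at h2
          exact absurd (congrArg Prod.snd h2) (by simp)
      have hstep : ∀ a ∈ G₀, a * a ≠ 1 →
          (f ((a : G), false)).1 ∈ G₀ ∧ (f ((a : G), false)).2 = false := by
        intro a haG ha2
        have h2 := hsq ((a : G), false)
        have h3 : cmul ((a : G), false) ((a : G), false) = ((a * a : G), false) := rfl
        rw [h3] at h2
        have h4 : f ((a * a : G), false) ≠ ((1 : G), false) := by
          rw [← hone]
          intro he
          exact ha2 (congrArg Prod.fst (hinj he))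
        rw [h2] at h4
        generalize hz : f ((a : G), false) = z at h4 ⊢
        obtain ⟨u, _ | _⟩ := z
        · refine ⟨?_, rfl⟩
          by_contra hu
          apply h4
          show ((u * u : G), false) = ((1 : G), false)
          rw [gd_out_sq hidx hv hv2 hconj hu]
        · exfalso
          apply h4
          show ((u⁻¹ * u : G), false) = ((1 : G), false)
          rw [inv_mul_cancel]
      have hAmem : ∀ a ∈ G₀,
          (f ((a : G), false)).1 ∈ G₀ ∧ (f ((a : G), false)).2 = false := by
        intro a haG
        by_cases ha2 : a * a = 1
        · have h5 : ((a : G), false) = cmul ((s : G), false) ((s⁻¹ * a : G), false) := by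
            show ((a : G), false) = ((s * (s⁻¹ * a) : G), false)
            rw [← mul_assoc, mul_inv_cancel, one_mul]
          have hsa : s⁻¹ * a ∈ G₀ := mul_mem (inv_mem hsG) haG
          have hsa2 : (s⁻¹ * a) * (s⁻¹ * a) ≠ 1 := by
            intro he
            apply hs2
            have hc : s⁻¹ * a * (s⁻¹ * a) = s⁻¹ * s⁻¹ * (a * a) := by
              calc s⁻¹ * a * (s⁻¹ * a) = s⁻¹ * (a * s⁻¹) * a := by group
                _ = s⁻¹ * (s⁻¹ * a) * a := by rw [hab _ haG _ (inv_mem hsG)]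
                _ = s⁻¹ * s⁻¹ * (a * a) := by group
            rw [he, ha2, mul_one] at hc
            have h7 : (s * s)⁻¹ = 1 := by
              rw [mul_inv_rev, ← hc]
            exact inv_eq_one.mp h7
          have h6 := hd ((s : G), false) ((s⁻¹ * a : G), false)
          obtain ⟨hu1, hu2⟩ := hstep s hsG hs2
          obtain ⟨hw1, hw2⟩ := hstep _ hsa hsa2
          rw [← h5] at h6
          have hz1 : f ((s : G), false) = ((f ((s : G), false)).1, false) :=
            Prod.ext rfl hu2
          have hz2 : f ((s⁻¹ * a : G), false) = ((f ((s⁻¹ * a : G), false)).1, false) :=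
            Prod.ext rfl hw2
          rcases h6 with h | h <;> rw [h, hz1, hz2]
          · exact ⟨mul_mem hu1 hw1, rfl⟩
          · exact ⟨mul_mem hw1 hu1, rfl⟩
        · exact hstep a haG ha2
      have hetaA : ∀ a ∈ G₀, f ((a : G), false) = ((f ((a : G), false)).1, false) :=
        fun a ha => Prod.ext rfl (hAmem a ha).2
      have hAsurj : ∀ z : G × Bool, z.1 ∈ G₀ → z.2 = false →
          ∃ a ∈ G₀, f ((a : G), false) = z := by
        have hFinj : Function.Injective
            (fun p : {a : G // a ∈ G₀} =>
              (⟨(f ((p : G), false)).1, (hAmem p p.2).1⟩ : {a : G // a ∈ G₀})) := by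
          intro p q hpq
          have h1 : (f ((p : G), false)).1 = (f ((q : G), false)).1 :=
            congrArg Subtype.val hpq
          have h2 : f ((p : G), false) = f ((q : G), false) :=
            Prod.ext h1 ((hAmem p p.2).2.trans (hAmem q q.2).2.symm)
          exact Subtype.ext (congrArg Prod.fst (hinj h2))
        have hFsurj := Finite.injective_iff_surjective.mp hFinj
        intro z hz1 hz2
        obtain ⟨p, hp⟩ := hFsurj ⟨z.1, hz1⟩
        refine ⟨p, p.2, ?_⟩
        have h1 : (f ((p : G), false)).1 = z.1 := congrArg Subtype.val hp
        exact Prod.ext h1 ((hAmem p p.2).2.trans hz2.symm)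
      have hWmem : ∀ w : G × Bool, ¬(w.1 ∈ G₀ ∧ w.2 = false) →
          ¬((f w).1 ∈ G₀ ∧ (f w).2 = false) := by
        intro w hw hfw
        obtain ⟨a, haG, hfa⟩ := hAsurj (f w) hfw.1 hfw.2
        apply hw
        rw [← hinj hfa]
        exact ⟨haG, rfl⟩
      have hadd : ∀ a ∈ G₀, ∀ b ∈ G₀, f ((a * b : G), false) =
          ((f ((a : G), false)).1 * (f ((b : G), false)).1, false) := by
        intro a haG b hbG
        have h6 := hd ((a : G), false) ((b : G), false)
        have h3 : cmul ((a : G), false) ((b : G), false) = ((a * b : G), false) := rfl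
        rw [h3, hetaA a haG, hetaA b hbG] at h6
        rcases h6 with h | h <;> rw [h]
        · rfl
        · show ((f ((b : G), false)).1 * (f ((a : G), false)).1, false) = _
          rw [hab _ (hAmem b hbG).1 _ (hAmem a haG).1]
      have hinvA : ∀ a ∈ G₀, f ((a⁻¹ : G), false) =
          ((f ((a : G), false)).1⁻¹, false) := by
        intro a haG
        have h := hadd a haG a⁻¹ (inv_mem haG)
        rw [mul_inv_cancel, hone] at h
        have h1 : (f ((a : G), false)).1 * (f ((a⁻¹ : G), false)).1 = 1 :=
          (congrArg Prod.fst h).symm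
        exact Prod.ext (eq_inv_of_mul_eq_one_right h1)
          ((hAmem a⁻¹ (inv_mem haG)).2)
      have hNI : ∀ a ∈ G₀, a * a ≠ 1 →
          (f ((a : G), false)).1 * (f ((a : G), false)).1 ≠ 1 := by
        intro a haG ha2 he
        have h := hadd a haG a haG
        rw [he, ← hone] at h
        exact ha2 (congrArg Prod.fst (hinj h))
      have hφs2 : (f ((s : G), false)).1 * (f ((s : G), false)).1 ≠ 1 := hNI s hsG hs2
      -- quadrant-related facts
      have hinA_f : ∀ z : G × Bool,
          (z.1 ∈ G₀ ∧ z.2 = false) ↔ ((f z).1 ∈ G₀ ∧ (f z).2 = false) := by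
        intro z
        constructor
        · rintro ⟨h1, h2⟩
          have hz : z = ((z.1 : G), false) := Prod.ext rfl h2
          rw [hz]
          exact hAmem z.1 h1
        · intro h
          by_contra hzw
          exact hWmem z hzw h
      have key := gd_inA_cmul (G₀ := G₀) hidx hv hv2
      have hSameQf : ∀ w w' : G × Bool, ¬(w.1 ∈ G₀ ∧ w.2 = false) →
          ¬(w'.1 ∈ G₀ ∧ w'.2 = false) →
          (((w.1 ∈ G₀ ↔ w'.1 ∈ G₀) ∧ w.2 = w'.2) ↔
            (((f w).1 ∈ G₀ ↔ (f w').1 ∈ G₀) ∧ (f w).2 = (f w').2)) := by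
        intro w w' hw hw'
        constructor
        · intro hs
          have h1 : (cmul w w').1 ∈ G₀ ∧ (cmul w w').2 = false := (key w w').mpr hs
          have h2 := (hinA_f (cmul w w')).mp h1
          rcases hd w w' with h | h
          · rw [h] at h2
            exact (key _ _).mp h2
          · rw [h] at h2
            have h3 := (key (f w') (f w)).mp h2
            exact ⟨h3.1.symm, h3.2.symm⟩
        · intro hs
          by_contra hns
          have h1 : ¬((cmul w w').1 ∈ G₀ ∧ (cmul w w').2 = false) :=
            fun hc => hns ((key w w').mp hc)
          have h2 : ¬((f (cmul w w')).1 ∈ G₀ ∧ (f (cmul w w')).2 = false) :=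
            fun hc => h1 ((hinA_f _).mpr hc)
          rcases hd w w' with h | h
          · rw [h] at h2
            exact h2 ((key _ _).mpr hs)
          · rw [h] at h2
            exact h2 ((key _ _).mpr ⟨hs.1.symm, hs.2.symm⟩)
      have hNegAlt : ∀ w : G × Bool, ¬(w.1 ∈ G₀ ∧ w.2 = false) → ∀ a ∈ G₀,
          cmul (f w) (f ((a : G), false)) =
            cmul (((f ((a : G), false)).1⁻¹ : G), false) (f w) := by
        intro w hw a haG
        have h1 := gd_I1 hidx hab hv hv2 hconj (hAmem a haG).1 (f w) (hWmem w hw)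
        rw [hetaA a haG]
        exact h1
      -- exclusivity
      have hexcl : ∀ w : G × Bool, ¬(w.1 ∈ G₀ ∧ w.2 = false) →
          (∀ a ∈ G₀, f (cmul ((a : G), false) w) = cmul (f ((a : G), false)) (f w)) →
          (∀ a ∈ G₀, f (cmul ((a : G), false) w) = cmul (f w) (f ((a : G), false))) →
          False := by
        intro w hw hP hN
        have h1 := (hP s hsG).symm.trans (hN s hsG)
        rw [hNegAlt w hw s hsG, hetaA s hsG] at h1
        have h2 := gd_cancel (f w) h1
        apply hφs2
        nth_rewrite 2 [h2]
        exact mul_inv_cancel _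
      -- per-element dichotomy (coherence of signs)
      have hMLa : ∀ w : G × Bool, ¬(w.1 ∈ G₀ ∧ w.2 = false) →
          (∀ a ∈ G₀, f (cmul ((a : G), false) w) = cmul (f ((a : G), false)) (f w)) ∨
          (∀ a ∈ G₀, f (cmul ((a : G), false) w) = cmul (f w) (f ((a : G), false))) := by
        intro w hw
        by_cases hpos : ∀ a ∈ G₀,
            f (cmul ((a : G), false) w) = cmul (f ((a : G), false)) (f w)
        · exact Or.inl hpos
        · right
          push_neg at hpos
          obtain ⟨a₀, ha₀G, ha₀⟩ := hpos
          have ha₀neg : f (cmul ((a₀ : G), false) w) = cmul (f w) (f ((a₀ : G), false)) := by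
            rcases hd ((a₀ : G), false) w with h | h
            · exact absurd h ha₀
            · exact h
          have hu₀G : (f ((a₀ : G), false)).1 ∈ G₀ := (hAmem a₀ ha₀G).1
          have hu₀2 : (f ((a₀ : G), false)).1 * (f ((a₀ : G), false)).1 ≠ 1 := by
            intro he
            apply ha₀
            rw [ha₀neg, hNegAlt w hw a₀ ha₀G, hetaA a₀ ha₀G,
              inv_eq_of_mul_eq_one_right he]
          intro b hbG
          rcases hd ((b : G), false) w with h | h
          swap
          · exact h
          by_cases hu2 : (f ((b : G), false)).1 * (f ((b : G), false)).1 = 1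
          · rw [h, hNegAlt w hw b hbG, hetaA b hbG, inv_eq_of_mul_eq_one_right hu2]
          exfalso
          have hbmG : (f ((b : G), false)).1 ∈ G₀ := (hAmem b hbG).1
          have hI2L := gd_I2 hidx hab hv hv2 hconj ha₀G hbG w hw
          have hfval : f ((a₀ * b⁻¹ : G), false) =
              ((f ((a₀ : G), false)).1 * (f ((b : G), false)).1⁻¹, false) := by
            rw [hadd a₀ ha₀G b⁻¹ (inv_mem hbG), hinvA b hbG]
          have h6 := hd (cmul ((a₀ : G), false) w) (cmul ((b : G), false) w)
          rw [hI2L, hfval, ha₀neg, hNegAlt w hw a₀ ha₀G, h, hetaA b hbG] at h6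
          have hfw : ¬((f w).1 ∈ G₀ ∧ (f w).2 = false) := hWmem w hw
          rcases h6 with h7 | h7
          · rw [gd_I2 hidx hab hv hv2 hconj (inv_mem hu₀G) hbmG (f w) hfw] at h7
            have h8 : (f ((a₀ : G), false)).1 * (f ((b : G), false)).1⁻¹ =
                (f ((a₀ : G), false)).1⁻¹ * (f ((b : G), false)).1⁻¹ :=
              congrArg Prod.fst h7
            have h9 := mul_right_cancel h8
            apply hu₀2
            nth_rewrite 1 [h9]
            exact inv_mul_cancel _
          · rw [gd_I2 hidx hab hv hv2 hconj hbmG (inv_mem hu₀G) (f w) hfw] at h7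
            have h8 : (f ((a₀ : G), false)).1 * (f ((b : G), false)).1⁻¹ =
                (f ((b : G), false)).1 * (f ((a₀ : G), false)).1⁻¹⁻¹ :=
              congrArg Prod.fst h7
            rw [inv_inv, hab _ hbmG _ hu₀G] at h8
            have h9 := mul_left_cancel h8
            apply hu2
            nth_rewrite 1 [← h9]
            exact inv_mul_cancel _
      -- commuting different-quadrant pairs
      have hcomm2 : ∀ z z' : G × Bool, ¬(z.1 ∈ G₀ ∧ z.2 = false) →
          ¬(z'.1 ∈ G₀ ∧ z'.2 = false) →
          ¬((z.1 ∈ G₀ ↔ z'.1 ∈ G₀) ∧ z.2 = z'.2) →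
          f (cmul z z') = cmul (f z) (f z') ∧ f (cmul z z') = cmul (f z') (f z) := by
        intro z z' hz hz' hne
        have hneF : ¬(((f z).1 ∈ G₀ ↔ (f z').1 ∈ G₀) ∧ (f z).2 = (f z').2) :=
          fun hs => hne ((hSameQf z z' hz hz').mpr hs)
        have hcm := gd_I3c hidx hv hv2 hconj (f z) (f z') (hWmem z hz) (hWmem z' hz') hneF
        rcases hd z z' with h | h
        · exact ⟨h, h.trans hcm⟩
        · exact ⟨h.trans hcm.symm, h⟩
      -- propagation of sign to products across quadrants
      have hLinkPos : ∀ w w' : G × Bool, ¬(w.1 ∈ G₀ ∧ w.2 = false) →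
          ¬(w'.1 ∈ G₀ ∧ w'.2 = false) →
          ¬((w.1 ∈ G₀ ↔ w'.1 ∈ G₀) ∧ w.2 = w'.2) →
          (∀ a ∈ G₀, f (cmul ((a : G), false) w) = cmul (f ((a : G), false)) (f w)) →
          (∀ a ∈ G₀, f (cmul ((a : G), false) (cmul w w')) =
            cmul (f ((a : G), false)) (f (cmul w w'))) := by
        intro w w' hw hw' hne hPos
        have hwwW : ¬((cmul w w').1 ∈ G₀ ∧ (cmul w w').2 = false) :=
          fun hc => hne ((key w w').mp hc)
        rcases hMLa (cmul w w') hwwW with hP | hN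
        · exact hP
        exfalso
        have hneF : ¬(((f w).1 ∈ G₀ ↔ (f w').1 ∈ G₀) ∧ (f w).2 = (f w').2) :=
          fun hs => hne ((hSameQf w w' hw hw').mpr hs)
        have hswW : ¬((cmul ((s : G), false) w).1 ∈ G₀ ∧ (cmul ((s : G), false) w).2 = false) := by
          intro hc
          have h1 := (key _ w).mp hc
          exact hw ⟨h1.1.mp hsG, h1.2.symm⟩
        have hQsw : ((cmul ((s : G), false) w).1 ∈ G₀ ↔ w.1 ∈ G₀) ∧
            (cmul ((s : G), false) w).2 = w.2 := by
          constructor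
          · rw [gd_memQ hidx hv hv2]
            simp [hsG]
          · rw [gd_bool]
            simp
        have hneSW : ¬((cmul ((s : G), false) w).1 ∈ G₀ ↔ w'.1 ∈ G₀) ∨
            ¬((cmul ((s : G), false) w).2 = w'.2) := by
          by_contra hcc
          push_neg at hcc
          exact hne ⟨hQsw.1.symm.trans hcc.1, hQsw.2.symm.trans hcc.2⟩
        have hneSW' : ¬(((cmul ((s : G), false) w).1 ∈ G₀ ↔ w'.1 ∈ G₀) ∧
            (cmul ((s : G), false) w).2 = w'.2) := by
          rintro ⟨h1, h2⟩
          rcases hneSW with h | h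
          · exact h h1
          · exact h h2
        have hI3s := gd_I3 hidx hab hv hv2 hconj hsG (one_mem G₀) w w' hw hw' hne
        rw [gd_one w', mul_one] at hI3s
        have hI3i := gd_I3 hidx hab hv hv2 hconj (hAmem s hsG).1 (one_mem G₀)
          (f w) (f w') (hWmem w hw) (hWmem w' hw') hneF
        rw [gd_one (f w'), mul_one] at hI3i
        have hE1 := (hcomm2 (cmul ((s : G), false) w) w' hswW hw' hneSW').1
        rw [hI3s, hPos s hsG, hetaA s hsG, hI3i, ← (hcomm2 w w' hw hw' hne).1] at hE1
        have hNs := hN s⁻¹ (inv_mem hsG)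
        rw [hNegAlt (cmul w w') hwwW s⁻¹ (inv_mem hsG), hinvA s hsG] at hNs
        dsimp only at hNs
        rw [inv_inv] at hNs
        have hceq := gd_cancel (f (cmul w w')) (hE1.symm.trans hNs)
        apply hφs2
        nth_rewrite 1 [← hceq]
        exact inv_mul_cancel _
      have hLinkNeg : ∀ w w' : G × Bool, ¬(w.1 ∈ G₀ ∧ w.2 = false) →
          ¬(w'.1 ∈ G₀ ∧ w'.2 = false) →
          ¬((w.1 ∈ G₀ ↔ w'.1 ∈ G₀) ∧ w.2 = w'.2) →
          (∀ a ∈ G₀, f (cmul ((a : G), false) w) = cmul (f w) (f ((a : G), false))) →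
          (∀ a ∈ G₀, f (cmul ((a : G), false) (cmul w w')) =
            cmul (f (cmul w w')) (f ((a : G), false))) := by
        intro w w' hw hw' hne hNeg
        have hwwW : ¬((cmul w w').1 ∈ G₀ ∧ (cmul w w').2 = false) :=
          fun hc => hne ((key w w').mp hc)
        rcases hMLa (cmul w w') hwwW with hP | hN
        swap
        · exact hN
        exfalso
        have hneF : ¬(((f w).1 ∈ G₀ ↔ (f w').1 ∈ G₀) ∧ (f w).2 = (f w').2) :=
          fun hs => hne ((hSameQf w w' hw hw').mpr hs)
        have hswW : ¬((cmul ((s : G), false) w).1 ∈ G₀ ∧ (cmul ((s : G), false) w).2 = false) := by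
          intro hc
          have h1 := (key _ w).mp hc
          exact hw ⟨h1.1.mp hsG, h1.2.symm⟩
        have hQsw : ((cmul ((s : G), false) w).1 ∈ G₀ ↔ w.1 ∈ G₀) ∧
            (cmul ((s : G), false) w).2 = w.2 := by
          constructor
          · rw [gd_memQ hidx hv hv2]
            simp [hsG]
          · rw [gd_bool]
            simp
        have hneSW' : ¬(((cmul ((s : G), false) w).1 ∈ G₀ ↔ w'.1 ∈ G₀) ∧
            (cmul ((s : G), false) w).2 = w'.2) := by
          rintro ⟨h1, h2⟩
          exact hne ⟨hQsw.1.symm.trans h1, hQsw.2.symm.trans h2⟩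
        have hI3s := gd_I3 hidx hab hv hv2 hconj hsG (one_mem G₀) w w' hw hw' hne
        rw [gd_one w', mul_one] at hI3s
        have hI3i := gd_I3 hidx hab hv hv2 hconj (inv_mem (hAmem s hsG).1) (one_mem G₀)
          (f w) (f w') (hWmem w hw) (hWmem w' hw') hneF
        rw [gd_one (f w'), mul_one, inv_inv] at hI3i
        have hE1 := (hcomm2 (cmul ((s : G), false) w) w' hswW hw' hneSW').1
        rw [hI3s, hNeg s hsG, hNegAlt w hw s hsG, hetaA s hsG, hI3i,
          ← (hcomm2 w w' hw hw' hne).1] at hE1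
        have hPs := hP s⁻¹ (inv_mem hsG)
        rw [hinvA s hsG] at hPs
        have hceq := gd_cancel (f (cmul w w')) (hE1.symm.trans hPs)
        apply hφs2
        nth_rewrite 2 [hceq]
        exact mul_inv_cancel _
      -- sign is constant across different quadrants
      have hPosIff : ∀ w w' : G × Bool, ¬(w.1 ∈ G₀ ∧ w.2 = false) →
          ¬(w'.1 ∈ G₀ ∧ w'.2 = false) →
          ¬((w.1 ∈ G₀ ↔ w'.1 ∈ G₀) ∧ w.2 = w'.2) →
          (∀ a ∈ G₀, f (cmul ((a : G), false) w) = cmul (f ((a : G), false)) (f w)) →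
          (∀ a ∈ G₀, f (cmul ((a : G), false) w') = cmul (f ((a : G), false)) (f w')) := by
        intro w w' hw hw' hne hPw
        rcases hMLa w' hw' with hP | hN
        · exact hP
        exfalso
        have h1 := hLinkPos w w' hw hw' hne hPw
        have hne' : ¬((w'.1 ∈ G₀ ↔ w.1 ∈ G₀) ∧ w'.2 = w.2) :=
          fun hc => hne ⟨hc.1.symm, hc.2.symm⟩
        have h2 := hLinkNeg w' w hw' hw hne' hN
        have hcm := gd_I3c hidx hv hv2 hconj w' w hw' hw hne'
        rw [hcm] at h2
        have hwwW : ¬((cmul w w').1 ∈ G₀ ∧ (cmul w w').2 = false) :=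
          fun hc => hne ((key w w').mp hc)
        exact hexcl (cmul w w') hwwW h1 h2
      have hNegIff : ∀ w w' : G × Bool, ¬(w.1 ∈ G₀ ∧ w.2 = false) →
          ¬(w'.1 ∈ G₀ ∧ w'.2 = false) →
          ¬((w.1 ∈ G₀ ↔ w'.1 ∈ G₀) ∧ w.2 = w'.2) →
          (∀ a ∈ G₀, f (cmul ((a : G), false) w) = cmul (f w) (f ((a : G), false))) →
          (∀ a ∈ G₀, f (cmul ((a : G), false) w') = cmul (f w') (f ((a : G), false))) := by
        intro w w' hw hw' hne hNw
        rcases hMLa w' hw' with hP | hN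
        swap
        · exact hN
        exfalso
        have h1 := hLinkNeg w w' hw hw' hne hNw
        have hne' : ¬((w'.1 ∈ G₀ ↔ w.1 ∈ G₀) ∧ w'.2 = w.2) :=
          fun hc => hne ⟨hc.1.symm, hc.2.symm⟩
        have h2 := hLinkPos w' w hw' hw hne' hP
        have hcm := gd_I3c hidx hv hv2 hconj w' w hw' hw hne'
        rw [hcm] at h2
        have hwwW : ¬((cmul w w').1 ∈ G₀ ∧ (cmul w w').2 = false) :=
          fun hc => hne ((key w w').mp hc)
        exact hexcl (cmul w w') hwwW h2 h1
      -- base points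
      have hw₀ : ¬(((1 : G), true).1 ∈ G₀ ∧ ((1 : G), true).2 = false) :=
        fun hc => by simpa using hc.2
      have hwv : ¬(((v : G), false).1 ∈ G₀ ∧ ((v : G), false).2 = false) :=
        fun hc => hv hc.1
      have hne₀v : ¬((((1 : G), true).1 ∈ G₀ ↔ ((v : G), false).1 ∈ G₀) ∧
          ((1 : G), true).2 = ((v : G), false).2) := fun hc => by simpa using hc.2
      rcases hMLa ((1 : G), true) hw₀ with hP0 | hN0
      · -- homomorphism case
        left
        have hPosAll : ∀ w : G × Bool, ¬(w.1 ∈ G₀ ∧ w.2 = false) → ∀ a ∈ G₀,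
            f (cmul ((a : G), false) w) = cmul (f ((a : G), false)) (f w) := by
          intro w hw
          by_cases hsame : (w.1 ∈ G₀ ↔ ((1 : G), true).1 ∈ G₀) ∧ w.2 = ((1 : G), true).2
          · have hnewv : ¬((w.1 ∈ G₀ ↔ ((v : G), false).1 ∈ G₀) ∧
                w.2 = ((v : G), false).2) := fun hc => by
              have h1 : w.2 = true := hsame.2
              rw [h1] at hc
              simpa using hc.2
            have hPv := hPosIff ((1 : G), true) ((v : G), false) hw₀ hwv hne₀v hP0
            exact hPosIff ((v : G), false) w hwv hw
              (fun hc => hnewv ⟨hc.1.symm, hc.2.symm⟩) hPv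
          · exact hPosIff ((1 : G), true) w hw₀ hw
              (fun hc => hsame ⟨hc.1.symm, hc.2.symm⟩) hP0
        intro x y
        by_cases hx : x.1 ∈ G₀ ∧ x.2 = false
        · by_cases hy : y.1 ∈ G₀ ∧ y.2 = false
          · have ex : x = ((x.1 : G), false) := Prod.ext rfl hx.2
            have ey : y = ((y.1 : G), false) := Prod.ext rfl hy.2
            have e1 : f (cmul x y) =
                ((f ((x.1 : G), false)).1 * (f ((y.1 : G), false)).1, false) := by
              rw [ex, ey]
              exact hadd x.1 hx.1 y.1 hy.1
            have e2 : cmul (f x) (f y) =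
                ((f ((x.1 : G), false)).1 * (f ((y.1 : G), false)).1, false) := by
              rw [ex, ey, hetaA x.1 hx.1, hetaA y.1 hy.1]
              rfl
            rw [e1, e2]
          · have ex : x = ((x.1 : G), false) := Prod.ext rfl hx.2
            rw [ex]
            exact hPosAll y hy x.1 hx.1
        · by_cases hy : y.1 ∈ G₀ ∧ y.2 = false
          · have ey : y = ((y.1 : G), false) := Prod.ext rfl hy.2
            have e1 : f (cmul x ((y.1 : G), false)) =
                cmul (((f ((y.1 : G), false)).1⁻¹ : G), false) (f x) := by
              rw [gd_I1 hidx hab hv hv2 hconj hy.1 x hx,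
                hPosAll x hx y.1⁻¹ (inv_mem hy.1), hinvA y.1 hy.1]
            rw [ey, e1]
            exact (hNegAlt x hx y.1 hy.1).symm
          · by_cases hsame : (x.1 ∈ G₀ ↔ y.1 ∈ G₀) ∧ x.2 = y.2
            · obtain ⟨c, hcG, hcx⟩ := gd_transQ hidx hv hv2 x y hx hy hsame
              have hI2b := gd_I2 hidx hab hv hv2 hconj (one_mem G₀) hcG x hx
              rw [gd_one x, one_mul] at hI2b
              have hI2i := gd_I2 hidx hab hv hv2 hconj (one_mem G₀)
                (hAmem c hcG).1 (f x) (hWmem x hx)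
              rw [gd_one (f x), one_mul] at hI2i
              have e1 : f (cmul x y) = (((f ((c : G), false)).1⁻¹ : G), false) := by
                rw [← hcx, hI2b, hinvA c hcG]
              have e2 : f y = cmul (((f ((c : G), false)).1 : G), false) (f x) := by
                rw [← hcx, hPosAll x hx c hcG]
                exact congrArg (fun z => cmul z (f x)) (hetaA c hcG)
              rw [e1, e2, hI2i]
            · exact (hcomm2 x y hx hy hsame).1
      · -- anti-homomorphism case
        right
        have hNegAll : ∀ w : G × Bool, ¬(w.1 ∈ G₀ ∧ w.2 = false) → ∀ a ∈ G₀,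
            f (cmul ((a : G), false) w) = cmul (f w) (f ((a : G), false)) := by
          intro w hw
          by_cases hsame : (w.1 ∈ G₀ ↔ ((1 : G), true).1 ∈ G₀) ∧ w.2 = ((1 : G), true).2
          · have hnewv : ¬((w.1 ∈ G₀ ↔ ((v : G), false).1 ∈ G₀) ∧
                w.2 = ((v : G), false).2) := fun hc => by
              have h1 : w.2 = true := hsame.2
              rw [h1] at hc
              simpa using hc.2
            have hNv := hNegIff ((1 : G), true) ((v : G), false) hw₀ hwv hne₀v hN0
            exact hNegIff ((v : G), false) w hwv hw
              (fun hc => hnewv ⟨hc.1.symm, hc.2.symm⟩) hNv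
          · exact hNegIff ((1 : G), true) w hw₀ hw
              (fun hc => hsame ⟨hc.1.symm, hc.2.symm⟩) hN0
        intro x y
        by_cases hx : x.1 ∈ G₀ ∧ x.2 = false
        · by_cases hy : y.1 ∈ G₀ ∧ y.2 = false
          · have ex : x = ((x.1 : G), false) := Prod.ext rfl hx.2
            have ey : y = ((y.1 : G), false) := Prod.ext rfl hy.2
            have e1 : f (cmul x y) =
                ((f ((x.1 : G), false)).1 * (f ((y.1 : G), false)).1, false) := by
              rw [ex, ey]
              exact hadd x.1 hx.1 y.1 hy.1
            have e2 : cmul (f y) (f x) =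
                ((f ((y.1 : G), false)).1 * (f ((x.1 : G), false)).1, false) := by
              rw [ex, ey, hetaA x.1 hx.1, hetaA y.1 hy.1]
              rfl
            rw [e1, e2]
            exact Prod.ext (hab _ (hAmem x.1 hx.1).1 _ (hAmem y.1 hy.1).1) rfl
          · have ex : x = ((x.1 : G), false) := Prod.ext rfl hx.2
            rw [ex]
            exact hNegAll y hy x.1 hx.1
        · by_cases hy : y.1 ∈ G₀ ∧ y.2 = false
          · have ey : y = ((y.1 : G), false) := Prod.ext rfl hy.2
            have e1 : f (cmul x ((y.1 : G), false)) =
                cmul (f x) (((f ((y.1 : G), false)).1⁻¹ : G), false) := by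
              rw [gd_I1 hidx hab hv hv2 hconj hy.1 x hx,
                hNegAll x hx y.1⁻¹ (inv_mem hy.1), hinvA y.1 hy.1]
            have e3 := gd_I1 hidx hab hv hv2 hconj
              (inv_mem (hAmem y.1 hy.1).1) (f x) (hWmem x hx)
            rw [ey, e1, e3, inv_inv]
            exact (congrArg (fun z => cmul z (f x)) (hetaA y.1 hy.1)).symm
          · by_cases hsame : (x.1 ∈ G₀ ↔ y.1 ∈ G₀) ∧ x.2 = y.2
            · obtain ⟨c, hcG, hcx⟩ := gd_transQ hidx hv hv2 x y hx hy hsame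
              have hI2b := gd_I2 hidx hab hv hv2 hconj (one_mem G₀) hcG x hx
              rw [gd_one x, one_mul] at hI2b
              have hI2i := gd_I2 hidx hab hv hv2 hconj
                (inv_mem (hAmem c hcG).1) (one_mem G₀) (f x) (hWmem x hx)
              rw [gd_one (f x), inv_one, mul_one] at hI2i
              have e1 : f (cmul x y) = (((f ((c : G), false)).1⁻¹ : G), false) := by
                rw [← hcx, hI2b, hinvA c hcG]
              have e2 : f y = cmul (((f ((c : G), false)).1⁻¹ : G), false) (f x) := by
                rw [← hcx, hNegAll x hx c hcG]
                exact hNegAlt x hx c hcG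
              rw [e1, e2, hI2i]
            · exact (hcomm2 x y hx hy hsame).2
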